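/- arXiv:0705.4314 — 2 statements merged into one kernel-verified Lean document; each statement's English description precedes it below -/
import Mathlib

section
/- Let c, l be nonnegative integers with c + l ≤ n, and let u_1, ..., u_{c+l}, v_1, ..., v_c be vectors in ℝ^{2n} such that u_i ⊙ v_i = 1 for all i ≤ c and all other pairwise symplectic products among them vanish. Define augmented vectors in ℝ^{2(n+c)} (with n + c modes) as follows: for u = (p|x) ∈ ℝ^{2n} and a, b ∈ ℝ^c, let aug(u; a, b) = (p, a | x, b) ∈ ℝ^{2(n+c)}. Set ũ_i = aug(u_i; −f_i, 0) for i ≤ c (where f_i is the i-th standard basis vector of ℝ^c), ũ_i = aug(u_i; 0, 0) for c < i ≤ c + l, and ṽ_j = aug(v_j; 0, f_j) for j ≤ c. Then all pairwise symplectic products (in ℝ^{2(n+c)}) among the vectors ũ_1, ..., ũ_{c+l}, ṽ_1, ..., ṽ_c vanish; that is, the augmented set spans an isotropic subspace of ℝ^{2(n+c)}. -/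
open Matrix BigOperators

noncomputable section

/-- The symplectic product on `ℝ^{2N}` for `N` modes, where a vector `u = (p|x)`
has momentum coordinates `u (Sum.inl i) = p_i` and position coordinates
`u (Sum.inr i) = x_i`: `u ⊙ v = p·x' − x·p'`. -/
def symp {N : ℕ} (u v : Fin N ⊕ Fin N → ℝ) : ℝ :=
  ∑ i : Fin N, (u (Sum.inl i) * v (Sum.inr i) - u (Sum.inr i) * v (Sum.inl i))

/-- Augment a vector `u = (p|x) ∈ ℝ^{2n}` by `c` extra modes (Bob's modes):
`aug u a b = (p, a | x, b) ∈ ℝ^{2(n+c)}`. -/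
def aug {n c : ℕ} (u : Fin n ⊕ Fin n → ℝ) (a b : Fin c → ℝ) :
    Fin (n + c) ⊕ Fin (n + c) → ℝ :=
  Sum.elim (Fin.append (fun j : Fin n => u (Sum.inl j)) a)
           (Fin.append (fun j : Fin n => u (Sum.inr j)) b)

/-- The augmented vector `ũ_i = aug(u_i; −f_i, 0)` for `i ≤ c` and
`ũ_i = aug(u_i; 0, 0)` for `c < i ≤ c + l` (a single formula covers both cases
since the entry `−f_i` exists only when `i < c`). -/
def utAug {n c l : ℕ} (u : Fin (c + l) → (Fin n ⊕ Fin n → ℝ)) (i : Fin (c + l)) :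
    Fin (n + c) ⊕ Fin (n + c) → ℝ :=
  aug (u i) (fun k : Fin c => if (k : ℕ) = (i : ℕ) then -1 else 0) 0

/-- The augmented vector `ṽ_j = aug(v_j; 0, f_j)`. -/
def vtAug {n c : ℕ} (v : Fin c → (Fin n ⊕ Fin n → ℝ)) (j : Fin c) :
    Fin (n + c) ⊕ Fin (n + c) → ℝ :=
  aug (v j) 0 (fun k : Fin c => if k = j then 1 else 0)


lemma symp_aug {n c : ℕ} (u u' : Fin n ⊕ Fin n → ℝ) (a b a' b' : Fin c → ℝ) :
    symp (aug u a b) (aug u' a' b') =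
      symp u u' + ∑ k : Fin c, (a k * b' k - b k * a' k) := by
  unfold symp aug
  rw [Fin.sum_univ_add]
  simp [Fin.append_left, Fin.append_right]

lemma symp_add_left {N : ℕ} (w z y : Fin N ⊕ Fin N → ℝ) :
    symp (w + z) y = symp w y + symp z y := by
  unfold symp
  rw [← Finset.sum_add_distrib]
  congr 1; ext i; simp; ring

lemma symp_smul_left {N : ℕ} (r : ℝ) (w y : Fin N ⊕ Fin N → ℝ) :
    symp (r • w) y = r * symp w y := by
  unfold symp
  rw [Finset.mul_sum]
  congr 1; ext i; simp; ring

lemma symp_add_right {N : ℕ} (y w z : Fin N ⊕ Fin N → ℝ) :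
    symp y (w + z) = symp y w + symp y z := by
  unfold symp
  rw [← Finset.sum_add_distrib]
  congr 1; ext i; simp; ring

lemma symp_smul_right {N : ℕ} (r : ℝ) (y w : Fin N ⊕ Fin N → ℝ) :
    symp y (r • w) = r * symp y w := by
  unfold symp
  rw [Finset.mul_sum]
  congr 1; ext i; simp; ring

lemma symp_zero_left {N : ℕ} (y : Fin N ⊕ Fin N → ℝ) : symp 0 y = 0 := by
  unfold symp; simp

lemma symp_zero_right {N : ℕ} (y : Fin N ⊕ Fin N → ℝ) : symp y 0 = 0 := by
  unfold symp; simp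

/-- Augmenting the hyperbolic pairs with `c` extra (Bob's) modes turns the set
into one whose pairwise symplectic products in `ℝ^{2(n+c)}` all vanish, i.e. the
augmented set spans an isotropic subspace of `ℝ^{2(n+c)}`. -/
theorem augmented_vectors_isotropic (n c l : ℕ) (hcl : c + l ≤ n)
    (u : Fin (c + l) → (Fin n ⊕ Fin n → ℝ)) (v : Fin c → (Fin n ⊕ Fin n → ℝ))
    (huu : ∀ i j, symp (u i) (u j) = 0)
    (hvv : ∀ i j, symp (v i) (v j) = 0)
    (huv : ∀ (i : Fin (c + l)) (j : Fin c),
      symp (u i) (v j) = if (i : ℕ) = (j : ℕ) then 1 else 0) :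
    (∀ i j, symp (utAug u i) (utAug u j) = 0) ∧
    (∀ i j, symp (vtAug v i) (vtAug v j) = 0) ∧
    (∀ i j, symp (utAug u i) (vtAug v j) = 0) ∧
    (∀ w ∈ Submodule.span ℝ (Set.range (utAug u) ∪ Set.range (vtAug v)),
      ∀ z ∈ Submodule.span ℝ (Set.range (utAug u) ∪ Set.range (vtAug v)),
        symp w z = 0) := by

  have key : ∀ w ∈ Set.range (utAug u) ∪ Set.range (vtAug v),
      ∀ z ∈ Set.range (utAug u) ∪ Set.range (vtAug v), symp w z = 0 := by
    have h1 : ∀ i j, symp (utAug u i) (utAug u j) = 0 := by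
      intro i j
      unfold utAug
      rw [symp_aug, huu]
      simp
    have h2 : ∀ i j, symp (vtAug v i) (vtAug v j) = 0 := by
      intro i j
      unfold vtAug
      rw [symp_aug, hvv]
      simp
    have anti : ∀ (w z : Fin (n+c) ⊕ Fin (n+c) → ℝ), symp w z = -symp z w := by
      intro w z
      unfold symp
      rw [← Finset.sum_neg_distrib]
      congr 1; ext i; ring
    have h3 : ∀ (i : Fin (c + l)) (j : Fin c), symp (utAug u i) (vtAug v j) = 0 := by
      intro i j
      unfold utAug vtAug
      rw [symp_aug, huv]
      have : ∀ k : Fin c,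
          ((if (k : ℕ) = (i : ℕ) then (-1 : ℝ) else 0) * (if k = j then 1 else 0)
            - (0 : Fin c → ℝ) k * (0 : Fin c → ℝ) k)
          = if k = j then (if (j : ℕ) = (i : ℕ) then -1 else 0) else 0 := by
        intro k
        by_cases h : k = j <;> simp [h]
      rw [Finset.sum_congr rfl (fun k _ => this k), Finset.sum_ite_eq']
      simp only [Finset.mem_univ, if_true]
      rcases eq_or_ne (i : ℕ) (j : ℕ) with h | h
      · rw [if_pos h, if_pos h.symm]; ring
      · rw [if_neg h, if_neg (fun e => h e.symm)]; ring
    have h4 : ∀ (i : Fin (c + l)) (j : Fin c), symp (vtAug v j) (utAug u i) = 0 := by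
      intro i j
      rw [anti, h3]; ring
    rintro w (⟨i, rfl⟩ | ⟨i, rfl⟩) z (⟨j, rfl⟩ | ⟨j, rfl⟩)
    · exact h1 i j
    · exact h3 i j
    · exact h4 j i
    · exact h2 i j
  refine ⟨fun i j => key _ (Or.inl ⟨i, rfl⟩) _ (Or.inl ⟨j, rfl⟩),
    fun i j => key _ (Or.inr ⟨i, rfl⟩) _ (Or.inr ⟨j, rfl⟩),
    fun i j => key _ (Or.inl ⟨i, rfl⟩) _ (Or.inr ⟨j, rfl⟩), ?_⟩
  intro w hw z hz
  induction hw using Submodule.span_induction generalizing z with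
  | mem x hx =>
    induction hz using Submodule.span_induction with
    | mem y hy => exact key x hx y hy
    | zero => exact symp_zero_right x
    | add y₁ y₂ _ _ ih1 ih2 => rw [symp_add_right, ih1, ih2]; ring
    | smul r y _ ih => rw [symp_smul_right, ih]; ring
  | zero => exact symp_zero_left z
  | add w₁ w₂ _ _ ih1 ih2 => rw [symp_add_left, ih1 z hz, ih2 z hz]; ring
  | smul r w _ ih => rw [symp_smul_left, ih z hz]; ring
end
end

section
/- Define four syndrome maps s_1, s_2, s_3, s_4 : ℝ × ℝ → ℝ^4 by s_1(p,x) = (x, √(1/2)(p − x), x, √(1/2)p − √2 x), s_2(p,x) = (x, √2 x − √(1/2)p, p, √(1/2)x − √2 p), s_3(p,x) = (0, −√2 x + √(1/2)p, x, −√(9/2) x), s_4(p,x) = (x, √(1/2)x, 0, √(1/2)(p + x)). Then these syndromes are unique for nonzero errors: for all i, j ∈ {1,2,3,4} and all p, x, p', x' ∈ ℝ with p ≠ 0, x ≠ 0, p' ≠ 0, x' ≠ 0, if s_i(p,x) = s_j(p',x') then i = j, p = p', and x = x'. In particular, the error syndrome uniquely identifies which of the four modes suffered the single-mode error D(u) with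 u = (p|x) and the values of p and x. -/
open Matrix BigOperators

noncomputable section

/-- Syndrome for a single-mode error `(p|x)` on mode 1:
`s₁(p,x) = (x, √(1/2)(p − x), x, √(1/2)p − √2 x)`. -/
def s₁ (p x : ℝ) : Fin 4 → ℝ :=
  ![x, Real.sqrt (1/2) * (p - x), x, Real.sqrt (1/2) * p - Real.sqrt 2 * x]

/-- Syndrome for a single-mode error `(p|x)` on mode 2:
`s₂(p,x) = (x, √2 x − √(1/2)p, p, √(1/2)x − √2 p)`. -/
def s₂ (p x : ℝ) : Fin 4 → ℝ :=
  ![x, Real.sqrt 2 * x - Real.sqrt (1/2) * p, p,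
    Real.sqrt (1/2) * x - Real.sqrt 2 * p]

/-- Syndrome for a single-mode error `(p|x)` on mode 3:
`s₃(p,x) = (0, −√2 x + √(1/2)p, x, −√(9/2) x)`. -/
def s₃ (p x : ℝ) : Fin 4 → ℝ :=
  ![0, -(Real.sqrt 2) * x + Real.sqrt (1/2) * p, x, -(Real.sqrt (9/2)) * x]

/-- Syndrome for a single-mode error `(p|x)` on mode 4:
`s₄(p,x) = (x, √(1/2)x, 0, √(1/2)(p + x))`. -/
def s₄ (p x : ℝ) : Fin 4 → ℝ :=
  ![x, Real.sqrt (1/2) * x, 0, Real.sqrt (1/2) * (p + x)]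

/-- The four syndrome maps, indexed by the mode suffering the error. -/
def syndrome : Fin 4 → ℝ → ℝ → Fin 4 → ℝ := ![s₁, s₂, s₃, s₄]

/-- The error syndromes of the example code are unique for any nonzero `p` and
`x`: the syndrome uniquely identifies on which mode the single-mode error
`D(u)`, `u = (p|x)`, occurred, together with the values of `p` and `x`. -/
theorem example_code_syndromes_unique :
    ∀ (i j : Fin 4) (p x p' x' : ℝ), p ≠ 0 → x ≠ 0 → p' ≠ 0 → x' ≠ 0 →
      syndrome i p x = syndrome j p' x' → i = j ∧ p = p' ∧ x = x' := by
  have h4 : Real.sqrt 4 = 2 := by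
    rw [show (4:ℝ) = 2^2 by norm_num, Real.sqrt_sq]; norm_num
  have h9' : Real.sqrt 9 = 3 := by
    rw [show (9:ℝ) = 3^2 by norm_num, Real.sqrt_sq]; norm_num
  have hb : Real.sqrt 2 = 2 * Real.sqrt (1/2) := by
    rw [show Real.sqrt 2 = Real.sqrt (4 * (1/2)) by norm_num,
      Real.sqrt_mul (by norm_num), h4]
  have h9 : Real.sqrt (9/2) = 3 * Real.sqrt (1/2) := by
    rw [show (9/2:ℝ) = 9 * (1/2) by norm_num, Real.sqrt_mul (by norm_num), h9']
  have ha : Real.sqrt (1/2) ≠ 0 := by positivity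
  intro i j p x p' x' hp hx hp' hx' h
  fin_cases i <;> fin_cases j <;> simp only [syndrome, Fin.isValue, Fin.mk_zero,
    Fin.mk_one, show (⟨2, by norm_num⟩ : Fin 4) = 2 from rfl,
    show (⟨3, by norm_num⟩ : Fin 4) = 3 from rfl, Matrix.cons_val_zero,
    Matrix.cons_val_one, Matrix.head_cons, Matrix.cons_val_two, Matrix.tail_cons,
    Matrix.cons_val_three] at h <;>
  · have h0 := congrFun h 0
    have h1 := congrFun h 1
    have h2 := congrFun h 2
    have h3 := congrFun h 3
    simp only [s₁, s₂, s₃, s₄, hb, h9, Matrix.cons_val_zero, Matrix.cons_val_one,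
      Matrix.head_cons, Matrix.cons_val_two, Matrix.tail_cons,
      Matrix.cons_val_three] at h0 h1 h2 h3
    first
    | exact absurd h0 hx
    | exact absurd h0.symm hx'
    | exact absurd h2 hx
    | exact absurd h2 hp
    | exact absurd h2.symm hx'
    | exact absurd h2.symm hp'
    | exact ⟨rfl, h2, h0⟩
    | -- case (1,1)
      (have e1 : p - x = p' - x' := mul_left_cancel₀ ha (by linear_combination h1)
       exact ⟨rfl, by linarith, h0⟩)
    | -- case (3,3)
      (have e1 : p - 2*x = p' - 2*x' := mul_left_cancel₀ ha (by linear_combination h1)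
       exact ⟨rfl, by linarith, h2⟩)
    | -- case (4,4)
      (have e3 : p + x = p' + x' := mul_left_cancel₀ ha (by linear_combination h3)
       exact ⟨rfl, by linarith, h0⟩)
    | -- case (1,2)
      (have e1 : p - x = 2*x' - p' := mul_left_cancel₀ ha (by linear_combination h1)
       have e3 : p - 2*x = x' - 2*p' := mul_left_cancel₀ ha (by linear_combination h3)
       exact absurd (show x = 0 by linarith) hx)
    | -- case (2,1)
      (have e1 : 2*x - p = p' - x' := mul_left_cancel₀ ha (by linear_combination h1)
       have e3 : x - 2*p = p' - 2*x' := mul_left_cancel₀ ha (by linear_combination h3)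
       exact absurd (show p = 0 by linarith) hp)
end
end
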